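/- Assume $\mathsf{PG}_d$: for every $d$-sequence of perfect Polish spaces and every finite coloring of their product there is a monochromatic somewhere dense grid. Then the $d$-dimensional Halpern–Läuchli theorem holds: for any sequence $T_0, \ldots, T_{d-1}$ of rooted, perfect, finitely branching trees of height $\omega$ without terminal nodes, any $r < \omega$, and any coloring $\gamma : \bigotimes \vec T \to r$ of the level product, there are an infinite set $a \subseteq \omega$ and $a$-strong subtrees $S_i \subseteq T_i$ such that $\bigotimes \vec S$ is monochromatic for $\gamma$. -/

import Mathlib

/-- A rooted, perfect, finitely branching tree of height `ω` without terminal nodes,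
represented as a set of finite sequences of natural numbers closed under prefixes.
Nodes at level `m` are the members of length `m`. -/
structure OmegaTree where
  mem : Set (List ℕ)
  root_mem : ([] : List ℕ) ∈ mem
  prefix_closed : ∀ s ∈ mem, ∀ t : List ℕ, t <+: s → t ∈ mem
  finitely_branching : ∀ s ∈ mem, {n : ℕ | s ++ [n] ∈ mem}.Finite
  no_terminal : ∀ s ∈ mem, ∃ n : ℕ, s ++ [n] ∈ mem
  perfect : ∀ s ∈ mem, ∃ t ∈ mem, s <+: t ∧
    ∃ n m : ℕ, n ≠ m ∧ t ++ [n] ∈ mem ∧ t ++ [m] ∈ mem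

/-- The branch space of an `OmegaTree`, topologized as a subspace of Baire space
(the topology of pointwise convergence). -/
def OmegaTree.Branch (T : OmegaTree) : Type :=
  {x : ℕ → ℕ // ∀ m : ℕ, (List.ofFn fun i : Fin m => x i) ∈ T.mem}

instance (T : OmegaTree) : TopologicalSpace T.Branch :=
  inferInstanceAs (TopologicalSpace {x : ℕ → ℕ // ∀ m : ℕ, (List.ofFn fun i : Fin m => x i) ∈ T.mem})

/-- The level-`m` node of a branch. -/
def OmegaTree.Branch.node {T : OmegaTree} (x : T.Branch) (m : ℕ) : List ℕ :=
  List.ofFn fun i : Fin m => x.val i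

/-- `S` is an `a`-strong subtree of `T`, where the infinite set `a ⊆ ω` is given by
its increasing enumeration `a : ℕ → ℕ`: all nodes of `S` lie on `T`-levels `a m`;
there is a unique node at level `a 0`; each node of `S` at level `a (m+1)` extends a
node of `S` at level `a m`; and for each node `s` of `S` at level `a m` and each
immediate successor of `s` in `T` there is exactly one node of `S` at level `a (m+1)`
extending it. -/
def IsStrongSubtree (T : OmegaTree) (a : ℕ → ℕ) (S : Set (List ℕ)) : Prop :=
  S ⊆ T.mem ∧
  (∀ s ∈ S, ∃ m : ℕ, s.length = a m) ∧
  (∃! s : List ℕ, s ∈ S ∧ s.length = a 0) ∧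
  (∀ m : ℕ, ∀ t ∈ S, t.length = a (m + 1) →
    ∃ s ∈ S, s.length = a m ∧ s <+: t) ∧
  (∀ m : ℕ, ∀ s ∈ S, s.length = a m → ∀ n : ℕ, s ++ [n] ∈ T.mem →
    ∃! t : List ℕ, t ∈ S ∧ t.length = a (m + 1) ∧ (s ++ [n]) <+: t)

namespace OmegaTree

variable {T : OmegaTree}

@[simp] lemma Branch.node_length (x : T.Branch) (m : ℕ) : (x.node m).length = m :=
  List.length_ofFn

lemma Branch.node_mem (x : T.Branch) (m : ℕ) : x.node m ∈ T.mem := x.property m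

lemma Branch.node_take (x : T.Branch) {k l : ℕ} (h : k ≤ l) :
    (x.node l).take k = x.node k := by
  apply List.ext_getElem
  · simp only [node, List.length_take, List.length_ofFn]; omega
  · intro i h1 h2
    simp only [node, List.getElem_take, List.getElem_ofFn]

lemma Branch.node_prefix (x : T.Branch) {k l : ℕ} (h : k ≤ l) :
    x.node k <+: x.node l := by
  rw [List.prefix_iff_eq_take, node_length, x.node_take h]

/-- extend a node to a branch -/
lemma exists_branch_through {s : List ℕ} (hs : s ∈ T.mem) :
    ∃ x : T.Branch, x.node s.length = s := by
  classical
  -- chain of extensions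
  have step : ∀ t : {t : List ℕ // t ∈ T.mem}, {t' : {t : List ℕ // t ∈ T.mem} // t.1 <+: t'.1 ∧ t'.1.length = t.1.length + 1} := by
    intro t
    choose n hn using T.no_terminal t.1 t.2
    exact ⟨⟨t.1 ++ [n], hn⟩, ⟨[n], rfl⟩, by simp⟩
  let F : ℕ → {t : List ℕ // t ∈ T.mem} := fun k => Nat.rec ⟨s, hs⟩ (fun _ p => (step p).1) k
  have hFsucc : ∀ k, (F k).1 <+: (F (k+1)).1 ∧ (F (k+1)).1.length = (F k).1.length + 1 :=
    fun k => (step (F k)).2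
  have hFlen : ∀ k, (F k).1.length = s.length + k := by
    intro k; induction k with
    | zero => rfl
    | succ k ih => rw [(hFsucc k).2, ih]; ring
  have hFmono : ∀ k l, k ≤ l → (F k).1 <+: (F l).1 := by
    intro k l h
    induction l with
    | zero => simp_all
    | succ l ih =>
      rcases Nat.eq_or_lt_of_le h with h' | h'
      · subst h'; exact List.prefix_rfl
      · exact (ih (Nat.lt_succ_iff.mp h')).trans (hFsucc l).1
  -- the branch
  refine ⟨⟨fun n => (F (n+1)).1.getD n 0, ?_⟩, ?_⟩
  · intro m
    have : (List.ofFn fun i : Fin m => (F (i.1+1)).1.getD i.1 0) = (F m).1.take m := by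
      apply List.ext_getElem
      · simp only [List.length_ofFn, List.length_take, hFlen]; omega
      · intro i h1 h2
        simp only [List.getElem_ofFn, List.getElem_take, Fin.val_mk]
        have hi : i < m := by simpa using h1
        have hlen : i < (F (i+1)).1.length := by have := hFlen (i+1); omega
        rw [List.getD_eq_getElem _ _ hlen]
        have hpfx := hFmono (i+1) m hi
        rw [List.prefix_iff_eq_take] at hpfx
        rw [List.getElem_of_eq hpfx, List.getElem_take]
    rw [this]
    exact T.prefix_closed _ (F m).2 _ (List.take_prefix _ _)
  · show (List.ofFn fun i : Fin s.length => (F (i.1+1)).1.getD i.1 0) = s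
    apply List.ext_getElem
    · simp
    · intro i h1 h2
      simp only [List.getElem_ofFn, Fin.val_mk]
      have hi : i < s.length := h2
      have hlen : i < (F (i+1)).1.length := by have := hFlen (i+1); omega
      rw [List.getD_eq_getElem _ _ hlen]
      have hpfx : (s : List ℕ) <+: (F (i+1)).1 := hFmono 0 (i+1) (Nat.zero_le _)
      rcases hpfx with ⟨u, hu⟩
      rw [List.getElem_of_eq hu.symm, List.getElem_append_left]

instance : Nonempty T.Branch := by
  obtain ⟨x, -⟩ := exists_branch_through T.root_mem
  exact ⟨x⟩

end OmegaTree

namespace OmegaTree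

variable {T : OmegaTree}

/-- cylinders in Baire space -/
lemma baire_cyl_isOpen (z : ℕ → ℕ) (m : ℕ) :
    IsOpen {y : ℕ → ℕ | ∀ k < m, y k = z k} := by
  have : {y : ℕ → ℕ | ∀ k < m, y k = z k} =
      (Finset.range m : Set ℕ).pi (fun k => {z k}) := by
    ext y; simp [Set.mem_pi]
  rw [this]
  exact isOpen_set_pi (Finset.range m).finite_toSet (fun k _ => isOpen_discrete _)

lemma isClosed_branchSet :
    IsClosed {x : ℕ → ℕ | ∀ m : ℕ, (List.ofFn fun i : Fin m => x i) ∈ T.mem} := by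
  rw [← isOpen_compl_iff, isOpen_iff_mem_nhds]
  intro x hx
  simp only [Set.mem_compl_iff, Set.mem_setOf_eq, not_forall] at hx
  obtain ⟨m, hm⟩ := hx
  have hopen := baire_cyl_isOpen x m
  refine Filter.mem_of_superset (hopen.mem_nhds (by simp)) ?_
  intro y hy
  simp only [Set.mem_compl_iff, Set.mem_setOf_eq, not_forall]
  refine ⟨m, ?_⟩
  have : (List.ofFn fun i : Fin m => y i) = (List.ofFn fun i : Fin m => x i) := by
    apply List.ext_getElem (by simp)
    intro i h1 h2
    simp only [List.getElem_ofFn, Fin.val_mk]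
    exact hy i (by simpa using h1)
  rwa [this]

instance (priority := 100) : PolishSpace
    {x : ℕ → ℕ | ∀ m : ℕ, (List.ofFn fun i : Fin m => x i) ∈ T.mem} :=
  IsClosed.polishSpace isClosed_branchSet

instance : PolishSpace T.Branch :=
  inferInstanceAs (PolishSpace {x : ℕ → ℕ | ∀ m : ℕ, (List.ofFn fun i : Fin m => x i) ∈ T.mem})

lemma Branch.val_eq_of_node_eq {y z : T.Branch} {m : ℕ} (h : y.node m = z.node m)
    {k : ℕ} (hk : k < m) : y.val k = z.val k := by
  have h2 : (y.node m)[k]'(by simpa using hk) = (z.node m)[k]'(by simpa using hk) :=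
    List.getElem_of_eq h _
  simpa [Branch.node, List.getElem_ofFn] using h2

/-- node-cylinders in the branch space -/
lemma cyl_isOpen (z : T.Branch) (m : ℕ) :
    IsOpen {y : T.Branch | y.node m = z.node m} := by
  have : {y : T.Branch | y.node m = z.node m} =
      Subtype.val ⁻¹' {y : ℕ → ℕ | ∀ k < m, y k = z.val k} := by
    ext y
    simp only [Set.mem_setOf_eq, Set.mem_preimage, Branch.node]
    constructor
    · intro h k hk
      exact Branch.val_eq_of_node_eq h hk
    · intro h
      apply List.ext_getElem (by simp)
      intro i h1 h2
      simp only [List.getElem_ofFn, Fin.val_mk]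
      exact h i (by simpa using h1)
  rw [this]
  exact (baire_cyl_isOpen z.val m).preimage continuous_subtype_val

lemma cyl_nonempty {s : List ℕ} (hs : s ∈ T.mem) :
    ∃ y : T.Branch, y.node s.length = s := exists_branch_through hs

/-- every open set contains a node-cylinder around each of its points -/
lemma exists_cyl_subset {V : Set T.Branch} (hV : IsOpen V) {x : T.Branch} (hx : x ∈ V) :
    ∃ m : ℕ, {y : T.Branch | y.node m = x.node m} ⊆ V := by
  obtain ⟨W, hW, hWV⟩ := isOpen_induced_iff.mp hV
  rw [isOpen_pi_iff] at hW
  have hxW : x.val ∈ W := by rw [← hWV] at hx; exact hx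
  obtain ⟨I, u, hu, hsub⟩ := hW x.val hxW
  refine ⟨(I.sup id) + 1, ?_⟩
  intro y hy
  rw [← hWV]
  apply hsub
  intro k hk
  have hk' : k < I.sup id + 1 := Nat.lt_succ_of_le (Finset.le_sup (f := id) hk)
  have : y.val k = x.val k := Branch.val_eq_of_node_eq hy hk'
  rw [this]
  exact (hu k hk).2

/-- density: from `V ⊆ closure Y` and a cylinder inside `V`, every node extending
the base of the cylinder has a branch of `Y` through it. -/
lemma dense_pick {V Y : Set T.Branch} (hVY : V ⊆ closure Y) {z : T.Branch} {N : ℕ}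
    (hcyl : {y : T.Branch | y.node N = z.node N} ⊆ V)
    {s : List ℕ} (hs : s ∈ T.mem) (hpre : z.node N <+: s) :
    ∃ y ∈ Y, y.node s.length = s := by
  obtain ⟨w, hw⟩ := cyl_nonempty hs
  have hNs : N ≤ s.length := by
    have := hpre.length_le; simpa using this
  have hwcyl : ∀ y : T.Branch, y.node s.length = s → y ∈ V := by
    intro y hy
    apply hcyl
    show y.node N = z.node N
    have h1 : (y.node s.length).take N = y.node N := y.node_take hNs
    rw [hy] at h1
    rw [← h1]
    rw [List.prefix_iff_eq_take] at hpre
    conv_lhs => rw [← Branch.node_length z N]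
    exact hpre.symm
  have hwV : w ∈ V := hwcyl w hw
  have hwcl : w ∈ closure Y := hVY hwV
  rw [mem_closure_iff] at hwcl
  obtain ⟨y, hy1, hy2⟩ := hwcl _ (cyl_isOpen w s.length) rfl
  refine ⟨y, hy2, ?_⟩
  have hy1' : y.node s.length = w.node s.length := hy1
  rw [hy1', hw]

lemma perfect_univ : Perfect (Set.univ : Set T.Branch) := by
  constructor
  · exact isClosed_univ
  · intro x _
    rw [accPt_iff_nhds]
    intro U hU
    obtain ⟨V, hVU, hVopen, hxV⟩ := mem_nhds_iff.mp hU
    obtain ⟨m, hcyl⟩ := exists_cyl_subset hVopen hxV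
    obtain ⟨t, htmem, hxt, n, n', hnn', hn, hn'⟩ := T.perfect (x.node m) (x.node_mem m)
    -- choose the successor differing from x
    have : ∃ k, t ++ [k] ∈ T.mem ∧ t ++ [k] ≠ x.node (t.length + 1) := by
      by_cases h : t ++ [n] = x.node (t.length + 1)
      · exact ⟨n', hn', fun h' => hnn' (by
          have := h.trans h'.symm
          simpa using List.append_inj_right this rfl)⟩
      · exact ⟨n, hn, h⟩
    obtain ⟨k, hk, hkne⟩ := this
    obtain ⟨y, hy⟩ := cyl_nonempty hk
    have hylen : (t ++ [k]).length = t.length + 1 := by simp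
    refine ⟨y, ⟨hVU (hcyl ?_), trivial⟩, ?_⟩
    · show y.node m = x.node m
      have hmt : m ≤ t.length := by
        have := hxt.length_le; simpa using this
      have h1 : (y.node (t.length+1)).take m = y.node m := y.node_take (by omega)
      rw [hylen] at hy
      rw [hy] at h1
      rw [← h1]
      rw [List.prefix_iff_eq_take] at hxt
      rw [List.take_append_of_le_length hmt]
      conv_rhs => rw [hxt]
      rw [Branch.node_length]
    · intro hyx
      apply hkne
      rw [← hyx]
      rw [hylen] at hy
      exact hy.symm ▸ rfl

end OmegaTree

open OmegaTree

structure HLSetup (d : ℕ) where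
  T : Fin d → OmegaTree
  r : ℕ
  γ : (Fin d → List ℕ) → Fin r
  j : Fin r
  Y : ∀ i, Set ((T i).Branch)
  U : Ultrafilter ℕ
  cof : ∀ s : Set ℕ, sᶜ.Finite → s ∈ U
  N : ℕ
  t : ∀ i, List ℕ
  ht_len : ∀ i, (t i).length = N
  pick : ∀ i, List ℕ → (T i).Branch
  pick_mem : ∀ i s, s ∈ (T i).mem → t i <+: s → pick i s ∈ Y i
  pick_node : ∀ i s, s ∈ (T i).mem → t i <+: s → (pick i s).node s.length = s
  mono : ∀ g : ∀ i, (T i).Branch, (∀ i, g i ∈ Y i) →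
    {l : ℕ | γ (fun i => (g i).node l) = j} ∈ U

namespace HLSetup

variable {d : ℕ} (c : HLSetup d)

structure State where
  lvl : ℕ
  B : ∀ i, Set ((c.T i).Branch)
  lvl_ge : c.N ≤ lvl
  fin : ∀ i, (B i).Finite
  ne : ∀ i, (B i).Nonempty
  sub : ∀ i, B i ⊆ c.Y i
  ext : ∀ i, ∀ y ∈ B i, y.node c.N = c.t i
  color : ∀ g : (i : Fin d) → (c.T i).Branch, (∀ i, g i ∈ B i) →
    c.γ (fun i => (g i).node lvl) = c.j

variable {c}

/-- the new family of branches at a successor stage -/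
def newB (st : c.State) (i : Fin d) : Set ((c.T i).Branch) :=
  ⋃ y ∈ st.B i, ⋃ n ∈ {n : ℕ | (y.node st.lvl ++ [n]) ∈ (c.T i).mem},
    {c.pick i (y.node st.lvl ++ [n])}

lemma mem_newB {st : c.State} {i : Fin d} {z : (c.T i).Branch} :
    z ∈ newB st i ↔ ∃ y ∈ st.B i, ∃ n : ℕ, (y.node st.lvl ++ [n]) ∈ (c.T i).mem ∧
      z = c.pick i (y.node st.lvl ++ [n]) := by
  simp [newB]

lemma prefix_t {st : c.State} {i : Fin d} {y : (c.T i).Branch} (hy : y ∈ st.B i) :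
    c.t i <+: y.node st.lvl := by
  have h := st.ext i y hy
  rw [← h]
  exact y.node_prefix st.lvl_ge

lemma prefix_t_succ {st : c.State} {i : Fin d} {y : (c.T i).Branch} (hy : y ∈ st.B i)
    (n : ℕ) : c.t i <+: y.node st.lvl ++ [n] :=
  (prefix_t hy).trans (List.prefix_append _ _)

lemma newB_sub (st : c.State) (i : Fin d) : newB st i ⊆ c.Y i := by
  intro z hz
  obtain ⟨y, hy, n, hn, rfl⟩ := mem_newB.mp hz
  exact c.pick_mem i _ hn (prefix_t_succ hy n)

lemma newB_fin (st : c.State) (i : Fin d) : (newB st i).Finite := by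
  apply Set.Finite.biUnion (st.fin i)
  intro y hy
  apply Set.Finite.biUnion
  · have := (c.T i).finitely_branching (y.node st.lvl) (y.node_mem _)
    exact this
  · intro n _; exact Set.finite_singleton _

lemma newB_ne (st : c.State) (i : Fin d) : (newB st i).Nonempty := by
  obtain ⟨y, hy⟩ := st.ne i
  obtain ⟨n, hn⟩ := (c.T i).no_terminal (y.node st.lvl) (y.node_mem _)
  exact ⟨_, mem_newB.mpr ⟨y, hy, n, hn, rfl⟩⟩

lemma newB_node {st : c.State} {i : Fin d} {y : (c.T i).Branch} (hy : y ∈ st.B i)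
    {n : ℕ} (hn : (y.node st.lvl ++ [n]) ∈ (c.T i).mem) :
    (c.pick i (y.node st.lvl ++ [n])).node (st.lvl + 1) = y.node st.lvl ++ [n] := by
  have := c.pick_node i _ hn (prefix_t_succ hy n)
  simpa using this

lemma newB_ext (st : c.State) (i : Fin d) :
    ∀ z ∈ newB st i, z.node c.N = c.t i := by
  intro z hz
  obtain ⟨y, hy, n, hn, rfl⟩ := mem_newB.mp hz
  have h1 := newB_node hy hn
  have hN : c.N ≤ st.lvl := st.lvl_ge
  have h2 : (_root_.OmegaTree.Branch.node (c.pick i (y.node st.lvl ++ [n])) (st.lvl+1)).take c.N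
      = (c.pick i (y.node st.lvl ++ [n])).node c.N :=
    Branch.node_take _ (by omega)
  rw [h1] at h2
  rw [← h2, List.take_append_of_le_length (by simpa using hN), y.node_take hN]
  exact st.ext i y hy

lemma exists_newlvl (st : c.State) :
    ∃ l : ℕ, st.lvl < l ∧ ∀ g : (i : Fin d) → (c.T i).Branch,
      (∀ i, g i ∈ newB st i) → c.γ (fun i => (g i).node l) = c.j := by
  have hpi : (Set.univ.pi (newB st)).Finite := Set.Finite.pi (fun i => newB_fin st i)
  have hA : {l : ℕ | st.lvl < l} ∈ c.U := by
    apply c.cof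
    have : {l : ℕ | st.lvl < l}ᶜ = Set.Iic st.lvl := by ext l; simp [Nat.not_lt]
    rw [this]; exact Set.finite_Iic _
  have hB : (⋂ g ∈ Set.univ.pi (newB st), {l : ℕ | c.γ (fun i => (g i).node l) = c.j}) ∈ (c.U : Filter ℕ) :=
    (Filter.biInter_mem hpi).mpr
      (fun g hg => c.mono g (fun i => newB_sub st i (hg i (Set.mem_univ i))))
  have hmem := Filter.inter_mem hA hB
  obtain ⟨l, hl1, hl2⟩ := Filter.nonempty_of_mem hmem
  refine ⟨l, hl1, ?_⟩
  intro g hg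
  simp only [Set.mem_iInter, Set.mem_setOf_eq] at hl2
  exact hl2 g (fun i _ => hg i)

noncomputable def step (st : c.State) : c.State where
  lvl := Classical.choose (exists_newlvl st)
  B := newB st
  lvl_ge := le_of_lt (lt_of_le_of_lt st.lvl_ge (Classical.choose_spec (exists_newlvl st)).1)
  fin := newB_fin st
  ne := newB_ne st
  sub := newB_sub st
  ext := newB_ext st
  color := (Classical.choose_spec (exists_newlvl st)).2

lemma step_lvl_gt (st : c.State) : st.lvl < (step st).lvl :=
  (Classical.choose_spec (exists_newlvl st)).1

lemma step_B (st : c.State) : (step st).B = newB st := rfl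

noncomputable def state (st0 : c.State) : ℕ → c.State
  | 0 => st0
  | m + 1 => step (state st0 m)

end HLSetup

/-- `PG_d` implies the `d`-dimensional Halpern–Läuchli theorem: assuming that every
finite coloring of any product of `d` perfect Polish spaces admits a monochromatic
somewhere dense grid, for any trees `T 0, …, T (d-1)` and any finite coloring `γ` of
the level product there are an infinite `a ⊆ ω` (given by its increasing enumeration)
and `a`-strong subtrees `S i ⊆ T i` whose level product is monochromatic for `γ`. -/
theorem stmt14 (d : ℕ) (hd : 1 ≤ d)
    (hPG : ∀ (X : Fin d → Type) (t : ∀ i, TopologicalSpace (X i)),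
      (∀ i, @PolishSpace (X i) (t i)) →
      (∀ i, @Perfect (X i) (t i) Set.univ) →
      (∀ i, Nonempty (X i)) →
      ∀ (r : ℕ) (γ : (∀ i, X i) → Fin r),
        ∃ (j : Fin r) (Y : ∀ i, Set (X i)),
          (∀ i, ∃ V : Set (X i), @IsOpen _ (t i) V ∧ V.Nonempty ∧
            V ⊆ @closure _ (t i) (Y i)) ∧
          {f : ∀ i, X i | ∀ i, f i ∈ Y i} ⊆ γ ⁻¹' {j})
    (T : Fin d → OmegaTree) (r : ℕ) (hr : 1 ≤ r)
    (γ : (Fin d → List ℕ) → Fin r) :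
    ∃ (a : ℕ → ℕ) (S : Fin d → Set (List ℕ)) (j : Fin r),
      StrictMono a ∧
      (∀ i, IsStrongSubtree (T i) a (S i)) ∧
      ∀ (m : ℕ) (f : Fin d → List ℕ),
        (∀ i, f i ∈ S i ∧ (f i).length = a m) → γ f = j := by
  classical
  -- a nonprincipal ultrafilter
  let U : Ultrafilter ℕ := Ultrafilter.of Filter.cofinite
  have hUcof : ∀ s : Set ℕ, sᶜ.Finite → s ∈ U := by
    intro s hs
    exact Ultrafilter.of_le Filter.cofinite (by rwa [Filter.mem_cofinite])
  -- the induced coloring of the branch product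
  have hcolor : ∀ g : (i : Fin d) → (T i).Branch,
      ∃ j : Fin r, {l : ℕ | γ (fun i => (g i).node l) = j} ∈ U := by
    intro g
    by_contra h
    push_neg at h
    have h' : ∀ j : Fin r, {l : ℕ | γ (fun i => (g i).node l) = j}ᶜ ∈ U := fun j =>
      Ultrafilter.compl_mem_iff_notMem.mpr (h j)
    have hmem : (⋂ j : Fin r, {l : ℕ | γ (fun i => (g i).node l) = j}ᶜ) ∈ (U : Filter ℕ) :=
      Filter.iInter_mem.mpr h'
    obtain ⟨l, hl⟩ := Filter.nonempty_of_mem hmem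
    simp only [Set.mem_iInter, Set.mem_compl_iff, Set.mem_setOf_eq] at hl
    exact hl (γ (fun i => (g i).node l)) rfl
  let γU : ((i : Fin d) → (T i).Branch) → Fin r := fun g => Classical.choose (hcolor g)
  have hγU : ∀ g, {l : ℕ | γ (fun i => (g i).node l) = γU g} ∈ U := fun g =>
    Classical.choose_spec (hcolor g)
  -- apply PG
  obtain ⟨j, Y, hdense, hgrid⟩ := hPG (fun i => (T i).Branch) (fun i => inferInstance)
    (fun i => inferInstance) (fun i => OmegaTree.perfect_univ) (fun i => inferInstance) r γU
  -- cylinders inside the closures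
  have hcyl0 : ∀ i, ∃ (x : (T i).Branch) (m : ℕ),
      {y : (T i).Branch | y.node m = x.node m} ⊆ closure (Y i) := by
    intro i
    obtain ⟨V, hVopen, ⟨x, hxV⟩, hVY⟩ := hdense i
    obtain ⟨m, hm⟩ := OmegaTree.exists_cyl_subset hVopen hxV
    exact ⟨x, m, hm.trans hVY⟩
  choose x M hMcyl using hcyl0
  set N : ℕ := Finset.univ.sup M with hN
  set t : ∀ i, List ℕ := fun i => (x i).node N with ht
  have ht_len : ∀ i, (t i).length = N := fun i => OmegaTree.Branch.node_length _ _
  have ht_mem : ∀ i, t i ∈ (T i).mem := fun i => OmegaTree.Branch.node_mem _ _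
  have hMN : ∀ i, M i ≤ N := fun i => Finset.le_sup (f := M) (Finset.mem_univ i)
  have hcylN : ∀ i, {y : (T i).Branch | y.node N = t i} ⊆ closure (Y i) := by
    intro i y hy
    apply hMcyl i
    show y.node (M i) = (x i).node (M i)
    have h1 : (y.node N).take (M i) = y.node (M i) := y.node_take (hMN i)
    have h2 : ((x i).node N).take (M i) = (x i).node (M i) := (x i).node_take (hMN i)
    rw [← h1, ← h2]
    exact congrArg _ hy
  -- the pick function
  have hpick0 : ∀ i (s : List ℕ), s ∈ (T i).mem → t i <+: s →
      ∃ y ∈ Y i, y.node s.length = s := by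
    intro i s hs hpre
    exact OmegaTree.dense_pick (hcylN i) (Set.Subset.refl _) hs hpre
  let pick : ∀ i, List ℕ → (T i).Branch := fun i s =>
    if h : s ∈ (T i).mem ∧ t i <+: s then Classical.choose (hpick0 i s h.1 h.2)
    else Classical.arbitrary _
  have pick_mem : ∀ i s, s ∈ (T i).mem → t i <+: s → pick i s ∈ Y i := by
    intro i s h1 h2
    simp only [pick, dif_pos (And.intro h1 h2)]
    exact (Classical.choose_spec (hpick0 i s h1 h2)).1
  have pick_node : ∀ i s, s ∈ (T i).mem → t i <+: s → (pick i s).node s.length = s := by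
    intro i s h1 h2
    simp only [pick, dif_pos (And.intro h1 h2)]
    exact (Classical.choose_spec (hpick0 i s h1 h2)).2
  -- monochromaticity in U
  have hmono : ∀ g : ∀ i, (T i).Branch, (∀ i, g i ∈ Y i) →
      {l : ℕ | γ (fun i => (g i).node l) = j} ∈ U := by
    intro g hg
    have : γU g = j := hgrid hg
    rw [← this]
    exact hγU g
  -- assemble the setup
  let c : HLSetup d := ⟨T, r, γ, j, Y, U, hUcof, N, t, ht_len, pick, pick_mem, pick_node, hmono⟩
  -- base state
  let y0 : ∀ i, (T i).Branch := fun i => pick i (t i)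
  have hy0Y : ∀ i, y0 i ∈ Y i := fun i => pick_mem i (t i) (ht_mem i) List.prefix_rfl
  have hy0node : ∀ i, (y0 i).node N = t i := by
    intro i
    have := pick_node i (t i) (ht_mem i) List.prefix_rfl
    rwa [ht_len i] at this
  have hlvl0 : ∃ l : ℕ, N ≤ l ∧ γ (fun i => (y0 i).node l) = j := by
    have hA : {l : ℕ | N ≤ l} ∈ U := by
      apply hUcof
      have : {l : ℕ | N ≤ l}ᶜ = Set.Iio N := by ext l; simp [Nat.not_le]
      rw [this]; exact Set.finite_Iio _
    obtain ⟨l, hl1, hl2⟩ := Filter.nonempty_of_mem (Filter.inter_mem hA (hmono y0 hy0Y))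
    exact ⟨l, hl1, hl2⟩
  obtain ⟨lvl0, hlvl0ge, hlvl0col⟩ := hlvl0
  let st0 : c.State :=
    { lvl := lvl0
      B := fun i => {y0 i}
      lvl_ge := hlvl0ge
      fin := fun i => Set.finite_singleton _
      ne := fun i => Set.singleton_nonempty _
      sub := fun i z hz => by rw [Set.mem_singleton_iff] at hz; rw [hz]; exact hy0Y i
      ext := fun i z hz => by rw [Set.mem_singleton_iff] at hz; rw [hz]; exact hy0node i
      color := by
        intro g hg
        have : g = y0 := funext fun i => hg i
        rw [this]
        exact hlvl0col }
  -- the recursion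
  let st : ℕ → c.State := HLSetup.state st0
  have hstep : ∀ m, st (m + 1) = HLSetup.step (st m) := fun m => rfl
  let a : ℕ → ℕ := fun m => (st m).lvl
  have ha : StrictMono a := by
    apply strictMono_nat_of_lt_succ
    intro m
    have := HLSetup.step_lvl_gt (st m)
    rwa [← hstep m] at this
  let S : Fin d → Set (List ℕ) := fun i =>
    ⋃ m : ℕ, (fun y : (T i).Branch => y.node (a m)) '' ((st m).B i)
  have hS : ∀ {i : Fin d} {s : List ℕ}, s ∈ S i ↔
      ∃ m, ∃ y ∈ (st m).B i, y.node (a m) = s := by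
    intro i s
    simp [S, Set.mem_iUnion]
    exact Iff.rfl
  have haInj : Function.Injective a := ha.injective
  -- membership in B at a given level
  have hB_of_len : ∀ {i : Fin d} {s : List ℕ} (m : ℕ), s ∈ S i → s.length = a m →
      ∃ y ∈ (st m).B i, y.node (a m) = s := by
    intro i s m hs hlen
    obtain ⟨m', y, hy, hnode⟩ := hS.mp hs
    have : a m' = a m := by rw [← hlen, ← hnode]; simp
    have hm : m' = m := haInj this
    subst hm
    exact ⟨y, hy, hnode⟩
  -- structure of B at successor stages
  have hBsucc : ∀ (m : ℕ) (i : Fin d) (z : (T i).Branch), z ∈ (st (m+1)).B i ↔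
      ∃ y ∈ (st m).B i, ∃ n : ℕ, (y.node (a m) ++ [n]) ∈ (T i).mem ∧
        z = pick i (y.node (a m) ++ [n]) := by
    intro m i z
    rw [hstep m]
    exact HLSetup.mem_newB
  have ham1 : ∀ m, a m + 1 ≤ a (m+1) := fun m => ha (Nat.lt_succ_self m)
  have key_node : ∀ (m : ℕ) (i : Fin d) (y : (T i).Branch), y ∈ (st m).B i →
      ∀ n : ℕ, (y.node (a m) ++ [n]) ∈ (T i).mem →
      (pick i (y.node (a m) ++ [n])).node (a m + 1) = y.node (a m) ++ [n] := by
    intro m i y hy n hn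
    have := pick_node i _ hn (HLSetup.prefix_t_succ (st := st m) hy n)
    simpa using this
  refine ⟨a, S, j, ha, ?_, ?_⟩
  · -- strong subtrees
    intro i
    refine ⟨?_, ?_, ?_, ?_, ?_⟩
    · -- S ⊆ T.mem
      intro s hs
      obtain ⟨m, y, hy, rfl⟩ := hS.mp hs
      exact y.node_mem _
    · -- levels
      intro s hs
      obtain ⟨m, y, hy, rfl⟩ := hS.mp hs
      exact ⟨m, by simp⟩
    · -- unique node at level a 0
      refine ⟨(y0 i).node (a 0), ⟨hS.mpr ⟨0, y0 i, rfl, rfl⟩, by simp⟩, ?_⟩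
      rintro s ⟨hs, hlen⟩
      obtain ⟨y, hy, hnode⟩ := hB_of_len 0 hs hlen
      have : y = y0 i := hy
      rw [← hnode, this]
    · -- predecessors
      intro m s hs hlen
      obtain ⟨z, hz, hnode⟩ := hB_of_len (m+1) hs hlen
      obtain ⟨y, hy, n, hn, hzeq⟩ := (hBsucc m i z).mp hz
      refine ⟨y.node (a m), hS.mpr ⟨m, y, hy, rfl⟩, by simp, ?_⟩
      -- y.node (a m) <+: s
      have h1 : z.node (a m + 1) = y.node (a m) ++ [n] := by rw [hzeq]; exact key_node m i y hy n hn
      have h2 : z.node (a m) = y.node (a m) := by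
        have h3 := z.node_take (Nat.le_succ (a m))
        rw [h1, List.take_append_of_le_length (by simp), y.node_take (le_refl _)] at h3
        exact h3.symm
      rw [← hnode, ← h2]
      exact z.node_prefix (Nat.le_of_succ_le (ham1 m))
    · -- successors
      intro m s hs hlen n hn
      obtain ⟨y, hy, hnode⟩ := hB_of_len m hs hlen
      subst hnode
      have hz : pick i (y.node (a m) ++ [n]) ∈ (st (m+1)).B i :=
        (hBsucc m i _).mpr ⟨y, hy, n, hn, rfl⟩
      set z : (T i).Branch := pick i (y.node (a m) ++ [n]) with hzdef
      have hznode : z.node (a m + 1) = y.node (a m) ++ [n] := key_node m i y hy n hn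
      refine ⟨z.node (a (m+1)), ⟨hS.mpr ⟨m+1, z, hz, rfl⟩, by simp, ?_⟩, ?_⟩
      · -- prefix
        rw [← hznode]
        exact z.node_prefix (ham1 m)
      · -- uniqueness
        rintro s' ⟨hs', hlen', hpre'⟩
        obtain ⟨z', hz', hnode'⟩ := hB_of_len (m+1) hs' hlen'
        obtain ⟨y', hy', n', hn', hz'eq⟩ := (hBsucc m i z').mp hz'
        have h1 : z'.node (a m + 1) = y'.node (a m) ++ [n'] := by
          rw [hz'eq]; exact key_node m i y' hy' n' hn'
        -- both prefixes of s' of the same length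
        have h2 : z'.node (a m + 1) <+: s' := by
          rw [← hnode']; exact z'.node_prefix (ham1 m)
        have h3 : y'.node (a m) ++ [n'] = y.node (a m) ++ [n] := by
          rw [← h1]
          have e2 := List.prefix_iff_eq_take.mp h2
          have e3 := List.prefix_iff_eq_take.mp hpre'
          rw [show (z'.node (a m + 1)).length = a m + 1 by simp] at e2
          rw [show (y.node (a m) ++ [n]).length = a m + 1 by simp] at e3
          rw [e2, ← e3]
        rw [← hnode', hz'eq, h3, ← hzdef]
  · -- monochromaticity
    intro m f hf
    have hf' : ∀ i, ∃ y ∈ (st m).B i, y.node (a m) = f i := by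
      intro i
      exact hB_of_len m (hf i).1 (hf i).2
    choose g hg1 hg2 using hf'
    have : f = fun i => (g i).node ((st m).lvl) := by
      funext i; rw [hg2 i]
    rw [this]
    exact (st m).color g hg1
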